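/- arXiv:1209.0587 — 3 statements merged into one kernel-verified Lean document; each statement's English description precedes it below -/
import Mathlib

section
/- Let S be a semigroup and h : 𝓘↗∞(ℤ) → S a semigroup homomorphism that is not constant (not annihilating). Then either h is injective, or the image h(𝓘↗∞(ℤ)) is a homomorphic image of the group ℤ × ℤ (the direct product of two copies of the additive group of integers), i.e. there exists a surjective homomorphism from ℤ × ℤ onto h(𝓘↗∞(ℤ)). -/
/-- A monotone injective partial self-map of `ℤ` with cofinite domain and cofinite range,
encoded as a function `ℤ → Option ℤ` where `none` means "undefined". -/
structure IsMIP (f : ℤ → Option ℤ) : Prop where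
  inj : ∀ ⦃x y a : ℤ⦄, f x = some a → f y = some a → x = y
  mono : ∀ ⦃x y a b : ℤ⦄, f x = some a → f y = some b → x ≤ y → a ≤ b
  cofin_dom : {x : ℤ | f x = none}.Finite
  cofin_ran : {y : ℤ | ∀ x : ℤ, f x ≠ some y}.Finite

/-- The monoid `𝓘↗∞(ℤ)` of monotone injective partial self-maps of `ℤ`
with cofinite domain and cofinite range. -/
def IZ : Type := {f : ℤ → Option ℤ // IsMIP f}

namespace IZ

/-- Composition of partial maps, written left-to-right: `(pcomp f g) x = g (f x)`. -/
def pcomp (f g : ℤ → Option ℤ) : ℤ → Option ℤ := fun x => (f x).bind g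

theorem isMIP_id : IsMIP (fun x : ℤ => some x) := by
  refine ⟨?_, ?_, ?_, ?_⟩
  · intro x y a hx hy; simp_all
  · intro x y a b hx hy h; simp_all
  · simp
  · have : {y : ℤ | ∀ x : ℤ, (fun x : ℤ => some x) x ≠ some y} = ∅ := by
      ext y; simp
    rw [this]; exact Set.finite_empty

theorem isMIP_comp {f g : ℤ → Option ℤ} (hf : IsMIP f) (hg : IsMIP g) :
    IsMIP (pcomp f g) := by
  refine ⟨?_, ?_, ?_, ?_⟩
  · intro x y a hx hy
    rw [pcomp, Option.bind_eq_some_iff] at hx hy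
    obtain ⟨b, hb, hba⟩ := hx
    obtain ⟨c, hc, hca⟩ := hy
    have hbc : b = c := hg.inj hba hca
    subst hbc
    exact hf.inj hb hc
  · intro x y a b hx hy hxy
    rw [pcomp, Option.bind_eq_some_iff] at hx hy
    obtain ⟨p, hp, hpa⟩ := hx
    obtain ⟨q, hq, hqb⟩ := hy
    exact hg.mono hpa hqb (hf.mono hp hq hxy)
  · have hsub : {x : ℤ | pcomp f g x = none} ⊆
        {x : ℤ | f x = none} ∪ f ⁻¹' (Option.some '' {a : ℤ | g a = none}) := by
      intro x hx
      simp only [Set.mem_setOf_eq, pcomp] at hx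
      cases hfx : f x with
      | none => exact Or.inl hfx
      | some a =>
        right
        rw [hfx] at hx
        simp only [Option.bind_some] at hx
        exact ⟨a, hx, hfx.symm⟩
    refine Set.Finite.subset (Set.Finite.union hf.cofin_dom ?_) hsub
    refine Set.Finite.preimage ?_ (hg.cofin_dom.image _)
    intro x hx y hy hxy
    obtain ⟨a, _, ha⟩ := hx
    obtain ⟨b, _, hb⟩ := hy
    have hfa : f x = some a := ha.symm
    have hfb : f y = some b := hb.symm
    have : some a = some b := by rw [← hfa, ← hfb, hxy]
    rw [Option.some_inj] at this
    subst this
    exact hf.inj hfa hfb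
  · have hsub : {y : ℤ | ∀ x : ℤ, pcomp f g x ≠ some y} ⊆
        {y : ℤ | ∀ x : ℤ, g x ≠ some y} ∪
          ((fun a => (g a).getD 0) '' {a : ℤ | ∀ x : ℤ, f x ≠ some a}) := by
      intro y hy
      simp only [Set.mem_setOf_eq] at hy
      by_cases hgy : ∀ a : ℤ, g a ≠ some y
      · exact Or.inl hgy
      · push_neg at hgy
        obtain ⟨a, hga⟩ := hgy
        right
        refine ⟨a, ?_, by simp [hga]⟩
        intro x hfx
        exact hy x (by simp [pcomp, hfx, hga])
    exact Set.Finite.subset (Set.Finite.union hg.cofin_ran (hf.cofin_ran.image _)) hsub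

instance : Monoid IZ where
  one := ⟨fun x => some x, isMIP_id⟩
  mul a b := ⟨pcomp a.1 b.1, isMIP_comp a.2 b.2⟩
  mul_assoc a b c := by
    apply Subtype.ext
    funext x
    exact Option.bind_assoc (a.1 x) b.1 c.1
  one_mul a := by
    apply Subtype.ext
    funext x
    rfl
  mul_one a := by
    apply Subtype.ext
    funext x
    show (a.1 x).bind some = a.1 x
    cases a.1 x <;> rfl

theorem mul_def (a b : IZ) : (a * b).1 = pcomp a.1 b.1 := rfl

theorem one_def : (1 : IZ).1 = fun x : ℤ => some x := rfl

/-- The domain of an element of `𝓘↗∞(ℤ)`. -/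
def dom (a : IZ) : Set ℤ := {x : ℤ | a.1 x ≠ none}

/-- The range of an element of `𝓘↗∞(ℤ)`. -/
def ran (a : IZ) : Set ℤ := {y : ℤ | ∃ x : ℤ, a.1 x = some y}

end IZ

namespace IZ

theorem ext' {a b : IZ} (h : ∀ x, a.1 x = b.1 x) : a = b := Subtype.ext (funext h)

theorem mul_apply (a b : IZ) (x : ℤ) : (a * b).1 x = (a.1 x).bind b.1 := rfl

theorem mul_apply_some {a b : IZ} {x y : ℤ} (h : a.1 x = some y) :
    (a * b).1 x = b.1 y := by rw [mul_apply, h]; rfl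

theorem mul_apply_none {a b : IZ} {x : ℤ} (h : a.1 x = none) :
    (a * b).1 x = none := by rw [mul_apply, h]; rfl

/-- Strict monotonicity. -/
theorem strict_mono {a : IZ} {x y u v : ℤ} (hx : a.1 x = some u) (hy : a.1 y = some v)
    (hxy : x < y) : u < v := by
  rcases lt_or_eq_of_le (a.2.mono hx hy hxy.le) with h | h
  · exact h
  · exact absurd (a.2.inj hx (h ▸ hy)) hxy.ne

open Classical in
/-- The inverse partial map. -/
noncomputable def inv (a : IZ) : IZ := by
  refine ⟨fun y => if h : ∃ x, a.1 x = some y then some h.choose else none, ?_, ?_, ?_, ?_⟩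
  · intro y y' x hy hy'
    split_ifs at hy hy' with h1 h2
    · rw [Option.some_inj] at hy hy'
      have h1s := h1.choose_spec
      have h2s := h2.choose_spec
      rw [hy] at h1s; rw [hy'] at h2s
      exact Option.some_inj.mp (h1s.symm.trans h2s)
  · intro y y' x x' hy hy' hle
    split_ifs at hy hy' with h1 h2
    rw [Option.some_inj] at hy hy'
    have h1s := h1.choose_spec
    have h2s := h2.choose_spec
    rw [hy] at h1s; rw [hy'] at h2s
    by_contra hlt
    push_neg at hlt
    have := a.2.mono h2s h1s hlt.le
    have hyy : y = y' := le_antisymm hle this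
    subst hyy
    exact absurd (a.2.inj h1s h2s) (ne_of_gt hlt)
  · have : {y : ℤ | (if h : ∃ x, a.1 x = some y then some h.choose else none) = none}
        = {y : ℤ | ∀ x : ℤ, a.1 x ≠ some y} := by
      ext y
      simp only [Set.mem_setOf_eq]
      constructor
      · intro h x hx
        rw [dif_pos ⟨x, hx⟩] at h; exact Option.some_ne_none _ h
      · intro h
        rw [dif_neg]; push_neg; exact h
    rw [this]; exact a.2.cofin_ran
  · refine Set.Finite.subset a.2.cofin_dom ?_
    intro x hx
    simp only [Set.mem_setOf_eq] at hx ⊢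
    by_contra hne
    obtain ⟨y, hy⟩ := Option.ne_none_iff_exists'.mp hne
    have : ∃ x', a.1 x' = some y := ⟨x, hy⟩
    have hs := this.choose_spec
    have : this.choose = x := a.2.inj hs hy
    exact hx y (by rw [dif_pos ‹∃ x', a.1 x' = some y›, this])

open Classical in
theorem inv_some {a : IZ} {x y : ℤ} (h : a.1 x = some y) : (inv a).1 y = some x := by
  have hex : ∃ x', a.1 x' = some y := ⟨x, h⟩
  show (if h : ∃ x', a.1 x' = some y then some h.choose else none) = some x
  rw [dif_pos hex, Option.some_inj]
  exact a.2.inj hex.choose_spec h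

open Classical in
theorem some_of_inv {a : IZ} {x y : ℤ} (h : (inv a).1 y = some x) : a.1 x = some y := by
  by_cases hex : ∃ x', a.1 x' = some y
  · have : (inv a).1 y = some hex.choose := dif_pos hex
    rw [this, Option.some_inj] at h
    rw [← h]; exact hex.choose_spec
  · have : (inv a).1 y = none := dif_neg hex
    rw [this] at h; exact absurd h (by simp)

theorem total_mul_inv {a : IZ} (h : ∀ x, a.1 x ≠ none) : a * inv a = 1 := by
  apply ext'
  intro x
  rcases Option.ne_none_iff_exists'.mp (h x) with ⟨y, hy⟩
  rw [mul_apply_some hy, inv_some hy]; rfl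

open Classical in
/-- Identity restricted to the complement of a finite set `F`. -/
noncomputable def co (F : Set ℤ) (hF : F.Finite) : IZ := by
  refine ⟨fun x => if x ∈ F then none else some x, ?_, ?_, ?_, ?_⟩
  · intro x y c hx hy
    split_ifs at hx hy
    rw [Option.some_inj] at hx hy; omega
  · intro x y c d hx hy hle
    split_ifs at hx hy
    rw [Option.some_inj] at hx hy; omega
  · refine hF.subset ?_
    intro x hx
    simp only [Set.mem_setOf_eq] at hx
    by_contra hm
    rw [if_neg hm] at hx
    exact Option.some_ne_none _ hx
  · refine hF.subset ?_
    intro y hy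
    simp only [Set.mem_setOf_eq] at hy
    by_contra hm
    exact hy y (by rw [if_neg hm])

theorem co_apply_mem {F : Set ℤ} {hF : F.Finite} {x : ℤ} (h : x ∈ F) :
    (co F hF).1 x = none := if_pos h

theorem co_apply_not_mem {F : Set ℤ} {hF : F.Finite} {x : ℤ} (h : x ∉ F) :
    (co F hF).1 x = some x := if_neg h

theorem co_empty : co ∅ Set.finite_empty = 1 := by
  apply ext'; intro x
  exact co_apply_not_mem (Set.notMem_empty x)

theorem co_mul_co {F G : Set ℤ} (hF : F.Finite) (hG : G.Finite) :
    co F hF * co G hG = co (F ∪ G) (hF.union hG) := by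
  apply ext'; intro x
  by_cases hxF : x ∈ F
  · rw [mul_apply_none (co_apply_mem hxF), (co_apply_mem (Set.mem_union_left _ hxF)).symm]
  · rw [mul_apply_some (co_apply_not_mem hxF)]
    by_cases hxG : x ∈ G
    · rw [co_apply_mem hxG, co_apply_mem (Set.mem_union_right _ hxG)]
    · rw [co_apply_not_mem hxG, co_apply_not_mem (fun h => h.elim hxF hxG)]

theorem co_congr {F G : Set ℤ} (hF : F.Finite) (hG : G.Finite) (h : F = G) :
    co F hF = co G hG := by subst h; rfl

/-- Translation by `k`. -/
def trans (k : ℤ) : IZ := by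
  refine ⟨fun x => some (x + k), ?_, ?_, ?_, ?_⟩
  · intro x y c hx hy
    rw [Option.some_inj] at hx hy; omega
  · intro x y c d hx hy hle
    rw [Option.some_inj] at hx hy; omega
  · simp
  · have : {y : ℤ | ∀ x : ℤ, some (x + k) ≠ some y} = ∅ := by
      ext y; simp only [Set.mem_setOf_eq, Set.mem_empty_iff_false, iff_false]
      push_neg; exact ⟨y - k, by rw [Option.some_inj]; omega⟩
    rw [this]; exact Set.finite_empty

theorem trans_apply (k x : ℤ) : (trans k).1 x = some (x + k) := rfl

theorem trans_mul_trans (j k : ℤ) : trans j * trans k = trans (j + k) := by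
  apply ext'; intro x
  rw [mul_apply_some (trans_apply j x), trans_apply, trans_apply, Option.some_inj]
  omega

/-- The map skipping the value `w` : total, monotone, injective, range `ℤ \ {w}`. -/
def skip (w : ℤ) : IZ := by
  refine ⟨fun x => some (if x < w then x else x + 1), ?_, ?_, ?_, ?_⟩
  · intro x y c hx hy
    rw [Option.some_inj] at hx hy
    split_ifs at hx hy <;> omega
  · intro x y c d hx hy hle
    rw [Option.some_inj] at hx hy
    split_ifs at hx hy <;> omega
  · simp
  · refine Set.Finite.subset (Set.finite_singleton w) ?_
    intro y hy
    simp only [Set.mem_setOf_eq] at hy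
    simp only [Set.mem_singleton_iff]
    by_contra hne
    rcases lt_or_gt_of_ne hne with h | h
    · exact hy y (by rw [if_pos h])
    · exact hy (y - 1) (by rw [if_neg (by omega), Option.some_inj]; omega)

theorem skip_apply (w x : ℤ) : (skip w).1 x = some (if x < w then x else x + 1) := rfl

theorem skip_ne (w x : ℤ) : (skip w).1 x ≠ some w := by
  rw [skip_apply, Ne, Option.some_inj]
  split_ifs <;> omega

theorem skip_surj {w y : ℤ} (h : y ≠ w) : ∃ x, (skip w).1 x = some y := by
  rcases lt_or_gt_of_ne h with hlt | hgt
  · exact ⟨y, by rw [skip_apply, if_pos hlt]⟩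
  · exact ⟨y - 1, by rw [skip_apply, if_neg (by omega), Option.some_inj]; omega⟩

end IZ
namespace IZ

/-! ### The shift maps -/

/-- The two-sided shift map: `x ↦ x + p` for negative `x`, `x ↦ x + q` for large `x`. -/
def shiftMap (p q : ℤ) : ℤ → Option ℤ := fun x =>
  if x < 0 then some (x + p) else if max (p - q) 0 ≤ x then some (x + q) else none

theorem isMIP_shiftMap (p q : ℤ) : IsMIP (shiftMap p q) := by
  have h1 : p - q ≤ max (p - q) 0 := le_max_left _ _
  have h2 : (0 : ℤ) ≤ max (p - q) 0 := le_max_right _ _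
  refine ⟨?_, ?_, ?_, ?_⟩
  · intro x y c hx hy
    unfold shiftMap at hx hy
    split_ifs at hx hy <;> simp only [Option.some_inj, reduceCtorEq] at hx hy <;> omega
  · intro x y c d hx hy hle
    unfold shiftMap at hx hy
    split_ifs at hx hy <;> simp only [Option.some_inj, reduceCtorEq] at hx hy <;> omega
  · refine Set.Finite.subset (Set.finite_Icc 0 (max (p - q) 0)) ?_
    intro x hx
    simp only [Set.mem_setOf_eq, shiftMap] at hx
    split_ifs at hx with hc1 hc2
    rw [Set.mem_Icc]; omega
  · refine Set.Finite.subset (Set.finite_Icc p (max (p - q) 0 + q)) ?_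
    intro y hy
    simp only [Set.mem_setOf_eq] at hy
    rw [Set.mem_Icc]
    constructor
    · by_contra hc
      push_neg at hc
      refine hy (y - p) ?_
      simp only [shiftMap, if_pos (show y - p < 0 by omega), Option.some_inj]
      omega
    · by_contra hc
      push_neg at hc
      refine hy (y - q) ?_
      simp only [shiftMap, if_neg (show ¬ y - q < 0 by omega),
        if_pos (show max (p - q) 0 ≤ y - q by omega), Option.some_inj]
      omega

/-- The shift element of `IZ`. -/
def shift (p q : ℤ) : IZ := ⟨shiftMap p q, isMIP_shiftMap p q⟩

theorem shift_apply_neg {p q x : ℤ} (h : x < 0) : (shift p q).1 x = some (x + p) := by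
  show shiftMap p q x = _
  simp only [shiftMap, if_pos h]

theorem shift_apply_pos {p q x : ℤ} (h : max (p - q) 0 ≤ x) :
    (shift p q).1 x = some (x + q) := by
  have h0 : ¬ x < 0 := by have := le_max_right (p - q) 0; omega
  show shiftMap p q x = _
  simp only [shiftMap, if_neg h0, if_pos h]

/-! ### Total maps onto an arbitrary cofinite set -/

theorem exists_total_onto (F : Set ℤ) (hF : F.Finite) :
    ∃ γ : IZ, (∀ x, ∃ y, γ.1 x = some y) ∧ ∀ y, (∃ x, γ.1 x = some y) ↔ y ∉ F := by
  refine Set.Finite.induction_on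
    (motive := fun F _ => ∃ γ : IZ, (∀ x, ∃ y, γ.1 x = some y) ∧
      ∀ y, (∃ x, γ.1 x = some y) ↔ y ∉ F) F hF ?_ ?_
  · exact ⟨1, fun x => ⟨x, rfl⟩, fun y =>
      ⟨fun _ => Set.notMem_empty y, fun _ => ⟨y, rfl⟩⟩⟩
  · intro w F' hw hF' ih
    obtain ⟨γ, htot, hran⟩ := ih
    obtain ⟨s, hs⟩ := (hran w).mpr hw
    refine ⟨skip s * γ, ?_, ?_⟩
    · intro x
      obtain ⟨z, hz⟩ : ∃ z, (skip s).1 x = some z := ⟨_, rfl⟩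
      obtain ⟨y, hy⟩ := htot z
      exact ⟨y, by rw [mul_apply_some hz, hy]⟩
    · intro y
      constructor
      · rintro ⟨x, hx⟩
        obtain ⟨z, hz⟩ : ∃ z, (skip s).1 x = some z := ⟨_, rfl⟩
        rw [mul_apply_some hz] at hx
        have hyF : y ∉ F' := (hran y).mp ⟨z, hx⟩
        have hzs : z ≠ s := by
          intro hzs; rw [hzs] at hz; exact skip_ne s x hz
        have hyw : y ≠ w := by
          intro hyw; subst hyw
          exact hzs (γ.2.inj hx hs)
        simp only [Set.mem_insert_iff]
        push_neg
        exact ⟨hyw, hyF⟩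
      · intro hy
        simp only [Set.mem_insert_iff] at hy
        push_neg at hy
        obtain ⟨hyw, hyF⟩ := hy
        obtain ⟨z, hz⟩ := (hran y).mpr hyF
        have hzs : z ≠ s := by
          intro hzs; subst hzs
          exact hyw (Option.some_inj.mp (hs.symm.trans hz)).symm
        obtain ⟨x, hx⟩ := skip_surj hzs
        exact ⟨x, by rw [mul_apply_some hx, hz]⟩

end IZ
namespace IZ

/-! ### Eventual behaviour -/

theorem gaps_finite (a : IZ) :
    {x : ℤ | ∃ u v, a.1 x = some u ∧ a.1 (x + 1) = some v ∧ v ≠ u + 1}.Finite := by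
  apply Set.Finite.of_finite_image (f := fun x => (a.1 x).getD 0 + 1)
  · refine a.2.cofin_ran.subset ?_
    rintro y ⟨x, ⟨u, v, hu, hv, hne⟩, rfl⟩
    simp only [Set.mem_setOf_eq, hu, Option.getD_some]
    intro z hz
    have huv : u < v := strict_mono hu hv (lt_add_one x)
    have huv2 : u + 1 < v := by omega
    rcases le_or_gt z x with hle | hlt
    · have := a.2.mono hz hu hle
      omega
    · have := a.2.mono hv hz (by omega)
      omega
  · rintro x ⟨u, v, hu, hv, hne⟩ x' ⟨u', v', hu', hv', hne'⟩ heq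
    simp only at heq
    rw [hu, hu'] at heq
    simp only [Option.getD_some] at heq
    have : u = u' := by omega
    subst this
    exact a.2.inj hu hu'

theorem eventually_pos (a : IZ) : ∃ q N : ℤ, ∀ x, N ≤ x → a.1 x = some (x + q) := by
  have hB : ({x : ℤ | a.1 x = none} ∪ {x : ℤ | a.1 (x + 1) = none} ∪
      {x : ℤ | ∃ u v, a.1 x = some u ∧ a.1 (x + 1) = some v ∧ v ≠ u + 1}).Finite := by
    refine Set.Finite.union (Set.Finite.union a.2.cofin_dom ?_) (gaps_finite a)
    have : {x : ℤ | a.1 (x + 1) = none} = (fun x => x + 1) ⁻¹' {x : ℤ | a.1 x = none} := rfl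
    rw [this]
    exact a.2.cofin_dom.preimage (fun a _ b _ hab => by omega)
  obtain ⟨N, hN⟩ : ∃ N : ℤ, ∀ x ∈ ({x : ℤ | a.1 x = none} ∪ {x : ℤ | a.1 (x + 1) = none} ∪
      {x : ℤ | ∃ u v, a.1 x = some u ∧ a.1 (x + 1) = some v ∧ v ≠ u + 1}), x ≤ N := by
    obtain ⟨N, hN⟩ := hB.bddAbove
    exact ⟨N, fun x hx => hN hx⟩
  have hnotin : ∀ x, N + 1 ≤ x → a.1 x ≠ none ∧ a.1 (x + 1) ≠ none ∧
      ¬ (∃ u v, a.1 x = some u ∧ a.1 (x + 1) = some v ∧ v ≠ u + 1) := by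
    intro x hx
    refine ⟨fun hc => ?_, fun hc => ?_, fun hc => ?_⟩
    · have := hN x (Or.inl (Or.inl hc)); omega
    · have := hN x (Or.inl (Or.inr hc)); omega
    · have := hN x (Or.inr hc); omega
  have hstep : ∀ x, N + 1 ≤ x → ∀ u, a.1 x = some u → a.1 (x + 1) = some (u + 1) := by
    intro x hx u hu
    obtain ⟨h1, h2, h3⟩ := hnotin x hx
    obtain ⟨v, hv⟩ := Option.ne_none_iff_exists'.mp h2
    by_cases hvu : v = u + 1
    · rw [hv, hvu]
    · exact absurd ⟨u, v, hu, hv, hvu⟩ h3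
  obtain ⟨u₀, hu₀⟩ := Option.ne_none_iff_exists'.mp (hnotin (N + 1) le_rfl).1
  refine ⟨u₀ - (N + 1), N + 1, Int.le_induction ?_ ?_⟩
  · rw [hu₀, Option.some_inj]; omega
  · intro n hn ih
    rw [hstep n hn _ ih, Option.some_inj]; omega

theorem eventually_neg (a : IZ) : ∃ p N : ℤ, ∀ x, x ≤ N → a.1 x = some (x + p) := by
  have hB : ({x : ℤ | a.1 x = none} ∪ {x : ℤ | a.1 (x - 1) = none} ∪
      {x : ℤ | ∃ u v, a.1 (x - 1) = some u ∧ a.1 x = some v ∧ v ≠ u + 1}).Finite := by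
    refine Set.Finite.union (Set.Finite.union a.2.cofin_dom ?_) ?_
    · have : {x : ℤ | a.1 (x - 1) = none} = (fun x => x - 1) ⁻¹' {x : ℤ | a.1 x = none} := rfl
      rw [this]
      exact a.2.cofin_dom.preimage (fun a _ b _ hab => by omega)
    · have : {x : ℤ | ∃ u v, a.1 (x - 1) = some u ∧ a.1 x = some v ∧ v ≠ u + 1} ⊆
          (fun x => x - 1) ⁻¹' {x : ℤ | ∃ u v, a.1 x = some u ∧ a.1 (x + 1) = some v ∧ v ≠ u + 1} := by
        intro x ⟨u, v, hu, hv, hne⟩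
        refine ⟨u, v, hu, ?_, hne⟩
        rw [show x - 1 + 1 = x by omega]
        exact hv
      refine Set.Finite.subset ((gaps_finite a).preimage (fun a _ b _ hab => by omega)) this
  obtain ⟨N, hN⟩ : ∃ N : ℤ, ∀ x ∈ ({x : ℤ | a.1 x = none} ∪ {x : ℤ | a.1 (x - 1) = none} ∪
      {x : ℤ | ∃ u v, a.1 (x - 1) = some u ∧ a.1 x = some v ∧ v ≠ u + 1}), N ≤ x := by
    obtain ⟨N, hN⟩ := hB.bddBelow
    exact ⟨N, fun x hx => hN hx⟩
  have hnotin : ∀ x, x ≤ N - 1 → a.1 x ≠ none ∧ a.1 (x - 1) ≠ none ∧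
      ¬ (∃ u v, a.1 (x - 1) = some u ∧ a.1 x = some v ∧ v ≠ u + 1) := by
    intro x hx
    refine ⟨fun hc => ?_, fun hc => ?_, fun hc => ?_⟩
    · have := hN x (Or.inl (Or.inl hc)); omega
    · have := hN x (Or.inl (Or.inr hc)); omega
    · have := hN x (Or.inr hc); omega
  have hstep : ∀ x, x ≤ N - 1 → ∀ v, a.1 x = some v → a.1 (x - 1) = some (v - 1) := by
    intro x hx v hv
    obtain ⟨h1, h2, h3⟩ := hnotin x hx
    obtain ⟨u, hu⟩ := Option.ne_none_iff_exists'.mp h2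
    by_cases hvu : v = u + 1
    · rw [hu, Option.some_inj]; omega
    · exact absurd ⟨u, v, hu, hv, hvu⟩ h3
  obtain ⟨u₀, hu₀⟩ := Option.ne_none_iff_exists'.mp (hnotin (N - 1) le_rfl).1
  refine ⟨u₀ - (N - 1), N - 1, Int.le_induction_down ?_ ?_⟩
  · rw [hu₀, Option.some_inj]; omega
  · intro n hn ih
    rw [hstep n hn _ ih, Option.some_inj]; omega

/-- Every element agrees with a shift map off a finite set. -/
theorem sigma_shift (a : IZ) : ∃ p q : ℤ, {x : ℤ | a.1 x ≠ (shift p q).1 x}.Finite := by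
  obtain ⟨q, Np, hpos⟩ := eventually_pos a
  obtain ⟨p, Nn, hneg⟩ := eventually_neg a
  refine ⟨p, q, Set.Finite.subset
    (Set.finite_Icc (min Nn (-1)) (max Np (max (p - q) 0))) ?_⟩
  intro x hx
  have hA1 : min Nn (-1) ≤ Nn := min_le_left _ _
  have hA2 : min Nn (-1) ≤ -1 := min_le_right _ _
  have hB1 : Np ≤ max Np (max (p - q) 0) := le_max_left _ _
  have hB2 : max (p - q) 0 ≤ max Np (max (p - q) 0) := le_max_right _ _
  rw [Set.mem_Icc]
  constructor
  · by_contra hc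
    push_neg at hc
    exact hx (by rw [hneg x (by omega), shift_apply_neg (by omega)])
  · by_contra hc
    push_neg at hc
    exact hx (by rw [hpos x (by omega), shift_apply_pos (by omega)])

/-- Products of shifts agree with the sum-shift off a finite set. -/
theorem shift_mul_sigma (p q p' q' : ℤ) :
    {x : ℤ | (shift p q * shift p' q').1 x ≠ (shift (p + p') (q + q')).1 x}.Finite := by
  have hm : p - q ≤ max (p - q) 0 ∧ (0:ℤ) ≤ max (p - q) 0 := ⟨le_max_left _ _, le_max_right _ _⟩
  have hp : p ≤ max p 0 ∧ (0:ℤ) ≤ max p 0 := ⟨le_max_left _ _, le_max_right _ _⟩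
  set B := max (max (max (p - q) 0) (max (p + p' - (q + q')) 0)) (max (max (p' - q') 0 - q) 0)
    with hBdef
  have hB1 : max (p - q) 0 ≤ B := le_trans (le_max_left _ _) (le_max_left _ _)
  have hB2 : max (p + p' - (q + q')) 0 ≤ B := le_trans (le_max_right _ _) (le_max_left _ _)
  have hB3 : max (p' - q') 0 - q ≤ B := le_trans (le_max_left _ _) (le_max_right _ _)
  have hB0 : (0:ℤ) ≤ B := le_trans (le_max_right _ _) (le_max_right _ _)
  refine Set.Finite.subset (Set.finite_Icc (-1 - max p 0) B) ?_
  intro x hx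
  rw [Set.mem_Icc]
  constructor
  · by_contra hc
    push_neg at hc
    refine hx ?_
    rw [mul_apply_some (shift_apply_neg (show x < 0 by omega)),
      shift_apply_neg (show x + p < 0 by omega), shift_apply_neg (show x < 0 by omega),
      Option.some_inj]
    omega
  · by_contra hc
    push_neg at hc
    refine hx ?_
    rw [mul_apply_some (shift_apply_pos (p := p) (q := q) (by omega)),
      shift_apply_pos (show max (p' - q') 0 ≤ x + q by omega),
      shift_apply_pos (show max (p + p' - (q + q')) 0 ≤ x by omega), Option.some_inj]
    omega

end IZ
namespace IZ

theorem trans_zero : trans 0 = 1 := by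
  apply ext'; intro x
  rw [trans_apply, add_zero]; rfl

theorem skip_mul_co (w : ℤ) : skip w * co {w} (Set.finite_singleton w) = skip w := by
  apply ext'; intro x
  obtain ⟨z, hz⟩ : ∃ z, (skip w).1 x = some z := ⟨_, rfl⟩
  have hzw : z ≠ w := fun hc => skip_ne w x (hc ▸ hz)
  rw [mul_apply_some hz, co_apply_not_mem (by simpa using hzw), hz]

theorem trans_co_trans (j : ℤ) (F : Set ℤ) (hF : F.Finite) :
    trans j * co F hF * trans (-j) =
      co ((fun x => x + j) ⁻¹' F) (hF.preimage (fun a _ b _ hab => by omega)) := by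
  apply ext'; intro x
  have h1 : (trans j * co F hF).1 x = (co F hF).1 (x + j) := mul_apply_some (trans_apply j x)
  by_cases hm : x + j ∈ F
  · rw [mul_apply_none (by rw [h1, co_apply_mem hm]),
      co_apply_mem (show x ∈ (fun x => x + j) ⁻¹' F from hm)]
  · rw [mul_apply_some (show (trans j * co F hF).1 x = some (x + j) by
        rw [h1, co_apply_not_mem hm]),
      co_apply_not_mem (show x ∉ (fun x => x + j) ⁻¹' F from hm), trans_apply, Option.some_inj]
    omega

section hom

variable {S : Type*} [Semigroup S] (h : IZ → S) (hhom : ∀ a b : IZ, h (a * b) = h a * h b)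

include hhom

theorem exists_hole_aux (a b : IZ) (x₀ u : ℤ) (he : h a = h b) (ha : a.1 x₀ = some u)
    (hne : b.1 x₀ ≠ some u) : ∃ (c : IZ) (x₁ : ℤ), h c = h 1 ∧ c.1 x₁ = none := by
  obtain ⟨γ, htot, hran⟩ := exists_total_onto {x : ℤ | a.1 x = none} a.2.cofin_dom
  obtain ⟨t₀, ht₀⟩ := (hran x₀).mpr (by simp [Set.mem_setOf_eq, ha])
  set A := γ * a with hA
  have hAtot : ∀ x, A.1 x ≠ none := by
    intro x
    obtain ⟨y, hy⟩ := htot x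
    have hya : a.1 y ≠ none := (hran y).mp ⟨x, hy⟩
    rw [hA, mul_apply_some hy]
    exact hya
  have hA1 : A * inv A = 1 := total_mul_inv hAtot
  have hAt₀ : A.1 t₀ = some u := by rw [hA, mul_apply_some ht₀, ha]
  have hkey : h ((γ * b) * inv A) = h 1 := by
    rw [hhom, hhom, ← he, ← hhom, ← hhom, ← hA, hA1]
  rcases hb : b.1 x₀ with _ | v
  · refine ⟨(γ * b) * inv A, t₀, hkey, ?_⟩
    rw [mul_apply, mul_apply_some ht₀, hb]; rfl
  · have hvu : v ≠ u := fun hc => hne (hc ▸ hb)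
    rcases hiv : (inv A).1 v with _ | w
    · refine ⟨(γ * b) * inv A, t₀, hkey, ?_⟩
      rw [mul_apply, mul_apply_some ht₀, hb, Option.bind_some, hiv]
    · -- c moves t₀ to w with A w = some v
      have hAw : A.1 w = some v := some_of_inv hiv
      have hwt₀ : w ≠ t₀ := by
        intro hc
        rw [hc, hAt₀] at hAw
        exact hvu (Option.some_inj.mp hAw).symm
      set c := (γ * b) * inv A with hc
      have hct : c.1 t₀ = some w := by
        rw [hc, mul_apply, mul_apply_some ht₀, hb, Option.bind_some, hiv]
      set c' := c * co {w} (Set.finite_singleton w) with hc'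
      have hkey' : h c' = h (co {w} (Set.finite_singleton w)) := by
        rw [hc', hhom, hkey, ← hhom, one_mul]
      have hc't : c'.1 t₀ = none := by
        rw [hc', mul_apply_some hct, co_apply_mem (Set.mem_singleton w)]
      obtain ⟨t₁, ht₁⟩ := skip_surj (Ne.symm hwt₀)
      refine ⟨skip w * c' * inv (skip w), t₁, ?_, ?_⟩
      · rw [hhom, hhom, hkey', ← hhom, ← hhom, skip_mul_co,
          total_mul_inv (fun x => by simp [skip_apply])]
      · rw [mul_apply, mul_apply_some ht₁, hc't]; rfl

theorem exists_hole (hnt : ∃ a b : IZ, a ≠ b ∧ h a = h b) :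
    ∃ (c : IZ) (x₁ : ℤ), h c = h 1 ∧ c.1 x₁ = none := by
  obtain ⟨a, b, hab, he⟩ := hnt
  obtain ⟨x₀, hx₀⟩ : ∃ x₀, a.1 x₀ ≠ b.1 x₀ := by
    by_contra hc
    push_neg at hc
    exact hab (ext' hc)
  rcases ha : a.1 x₀ with _ | u
  · rcases hb : b.1 x₀ with _ | v
    · rw [ha, hb] at hx₀; exact absurd rfl hx₀
    · exact exists_hole_aux h hhom b a x₀ v he.symm hb (by simp [ha])
  · exact exists_hole_aux h hhom a b x₀ u he ha (fun hc => hx₀ (ha.trans hc.symm))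

theorem co_all (hnt : ∃ a b : IZ, a ≠ b ∧ h a = h b) :
    ∀ (F : Set ℤ) (hF : F.Finite), h (co F hF) = h 1 := by
  obtain ⟨c, x₁, hc, hx₁⟩ := exists_hole h hhom hnt
  -- the domain-complement idempotent of c is related to 1
  set F₀ := {x : ℤ | c.1 x = none} with hF₀def
  have hF₀ : F₀.Finite := c.2.cofin_dom
  have habs : co F₀ hF₀ * c = c := by
    apply ext'; intro x
    by_cases hm : x ∈ F₀
    · rw [mul_apply_none (co_apply_mem hm), hm]
    · rw [mul_apply_some (co_apply_not_mem hm)]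
  have hco₀ : h (co F₀ hF₀) = h 1 := by
    calc h (co F₀ hF₀) = h (co F₀ hF₀ * 1) := by rw [mul_one]
    _ = h (co F₀ hF₀) * h 1 := hhom _ _
    _ = h (co F₀ hF₀) * h c := by rw [hc]
    _ = h (co F₀ hF₀ * c) := (hhom _ _).symm
    _ = h c := by rw [habs]
    _ = h 1 := hc
  -- singletons
  have hsingle : ∀ k : ℤ, h (co {k} (Set.finite_singleton k)) = h 1 := by
    intro k
    set j := x₁ - k with hj
    have hGfin : ((fun x => x + j) ⁻¹' F₀).Finite := hF₀.preimage (fun a _ b _ hab => by omega)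
    have hkG : k ∈ (fun x => x + j) ⁻¹' F₀ := by
      show c.1 (k + j) = none
      rw [show k + j = x₁ by omega]
      exact hx₁
    have hcoG : h (co _ hGfin) = h 1 := by
      rw [← trans_co_trans j F₀ hF₀]
      calc h (trans j * co F₀ hF₀ * trans (-j))
          = h (trans j) * h (co F₀ hF₀) * h (trans (-j)) := by rw [hhom, hhom]
      _ = h (trans j) * h 1 * h (trans (-j)) := by rw [hco₀]
      _ = h (trans j * 1 * trans (-j)) := by rw [← hhom, ← hhom]
      _ = h 1 := by rw [mul_one, trans_mul_trans, show j + -j = 0 by omega, trans_zero]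
    calc h (co {k} (Set.finite_singleton k))
        = h (co {k} (Set.finite_singleton k) * 1) := by rw [mul_one]
    _ = h (co {k} (Set.finite_singleton k)) * h 1 := hhom _ _
    _ = h (co {k} (Set.finite_singleton k)) * h (co _ hGfin) := by rw [hcoG]
    _ = h (co {k} (Set.finite_singleton k) * co _ hGfin) := (hhom _ _).symm
    _ = h (co ({k} ∪ _) _) := by rw [co_mul_co]
    _ = h (co _ hGfin) := by
          rw [co_congr _ hGfin (Set.union_eq_self_of_subset_left
            (Set.singleton_subset_iff.mpr hkG))]
    _ = h 1 := hcoG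
  -- all finite sets by induction
  intro F hF
  refine Set.Finite.induction_on
    (motive := fun F _ => ∀ hF : F.Finite, h (co F hF) = h 1) F hF ?_ ?_ hF
  · intro hF
    rw [co_empty]
  · intro w F' hw hF' ih hins
    have : co (insert w F') hins = co {w} (Set.finite_singleton w) * co F' hF' := by
      rw [co_mul_co]
      exact co_congr _ _ Set.singleton_union.symm
    rw [this, hhom, hsingle, ih hF', ← hhom, one_mul]

/-- The key lemma: a non-injective homomorphism identifies all σ-equivalent elements. -/
theorem hom_eq_of_sigma (hnt : ∃ a b : IZ, a ≠ b ∧ h a = h b) (a b : IZ)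
    (hab : {x : ℤ | a.1 x ≠ b.1 x}.Finite) : h a = h b := by
  have hco := co_all h hhom hnt _ hab
  have hagree : co _ hab * a = co _ hab * b := by
    apply ext'; intro x
    by_cases hm : x ∈ {x : ℤ | a.1 x ≠ b.1 x}
    · rw [mul_apply_none (co_apply_mem hm), mul_apply_none (co_apply_mem hm)]
    · simp only [Set.mem_setOf_eq, not_not] at hm
      rw [mul_apply_some (co_apply_not_mem (by simpa using hm)),
        mul_apply_some (co_apply_not_mem (by simpa using hm)), hm]
  calc h a = h (1 * a) := by rw [one_mul]
  _ = h 1 * h a := hhom _ _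
  _ = h (co _ hab) * h a := by rw [hco]
  _ = h (co _ hab * a) := (hhom _ _).symm
  _ = h (co _ hab * b) := by rw [hagree]
  _ = h (co _ hab) * h b := hhom _ _
  _ = h 1 * h b := by rw [hco]
  _ = h b := by rw [← hhom, one_mul]

end hom

end IZ
/-- Every non-constant (non-annihilating) semigroup homomorphism `h` from
`𝓘↗∞(ℤ)` into a semigroup `S` is either injective, or its image is a homomorphic image
of the group `ℤ × ℤ`: there is a map `g : ℤ × ℤ → S` turning addition into multiplication
whose range is exactly the range of `h`. -/
theorem statement16 {S : Type*} [Semigroup S] (h : IZ → S)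
    (hhom : ∀ a b : IZ, h (a * b) = h a * h b)
    (hnc : ∃ a b : IZ, h a ≠ h b) :
    Function.Injective h ∨
      ∃ g : ℤ × ℤ → S, (∀ p q : ℤ × ℤ, g (p + q) = g p * g q) ∧
        Set.range g = Set.range h := by
  by_cases hinj : Function.Injective h
  · exact Or.inl hinj
  right
  obtain ⟨a₀, b₀, he₀, hne₀⟩ := Function.not_injective_iff.mp hinj
  have hnt : ∃ a b : IZ, a ≠ b ∧ h a = h b := ⟨a₀, b₀, hne₀, he₀⟩
  have key : ∀ a b : IZ, {x : ℤ | a.1 x ≠ b.1 x}.Finite → h a = h b :=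
    IZ.hom_eq_of_sigma h hhom hnt
  refine ⟨fun pq => h (IZ.shift pq.1 pq.2), ?_, ?_⟩
  · intro p q
    have h1 : h (IZ.shift p.1 p.2 * IZ.shift q.1 q.2) = h (IZ.shift (p.1 + q.1) (p.2 + q.2)) :=
      key _ _ (IZ.shift_mul_sigma p.1 p.2 q.1 q.2)
    show h (IZ.shift (p.1 + q.1) (p.2 + q.2)) = _
    rw [← h1, hhom]
  · ext s
    simp only [Set.mem_range]
    constructor
    · rintro ⟨⟨p, q⟩, rfl⟩
      exact ⟨IZ.shift p q, rfl⟩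
    · rintro ⟨a, rfl⟩
      obtain ⟨p, q, hpq⟩ := IZ.sigma_shift a
      exact ⟨(p, q), (key _ _ hpq).symm⟩
end

section
/- Let τ be a Hausdorff topology on 𝓘↗∞(ℤ) such that the multiplication is separately continuous (for every α, both the left translation χ ↦ α·χ and the right translation χ ↦ χ·α are continuous) and such that (𝓘↗∞(ℤ), τ) is a Baire space. Then τ is the discrete topology. -/
namespace IZ

/-! ### Basic helpers -/

theorem smono {χ : IZ} {x y c d : ℤ} (hx : χ.1 x = some c) (hy : χ.1 y = some d)
    (hxy : x < y) : c < d := by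
  rcases (χ.2.mono hx hy hxy.le).lt_or_eq with h | h
  · exact h
  · subst h; exact absurd (χ.2.inj hx hy) hxy.ne

/-! ### The set of "bad" points where `χ` is not locally a translation is finite -/

theorem bad_finite (χ : IZ) :
    {x : ℤ | ¬ ∃ c, χ.1 x = some c ∧ χ.1 (x + 1) = some (c + 1)}.Finite := by
  have h3 : {x : ℤ | ∃ c, χ.1 x = some c ∧ ∀ z, χ.1 z ≠ some (c + 1)}.Finite := by
    apply Set.Finite.of_finite_image (f := fun x => (χ.1 x).getD 0 + 1)
    · apply χ.2.cofin_ran.subset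
      rintro y ⟨x, ⟨c, hc, hall⟩, rfl⟩
      simpa [hc] using hall
    · rintro x ⟨c, hc, -⟩ x' ⟨c', hc', -⟩ h
      simp only [hc, hc', Option.getD_some, add_left_inj] at h
      exact χ.2.inj hc (h ▸ hc')
  have hsub : {x : ℤ | ¬ ∃ c, χ.1 x = some c ∧ χ.1 (x + 1) = some (c + 1)} ⊆
      ({x : ℤ | χ.1 x = none} ∪ ((fun x => x - 1) '' {x : ℤ | χ.1 x = none})) ∪
      {x : ℤ | ∃ c, χ.1 x = some c ∧ ∀ z, χ.1 z ≠ some (c + 1)} := by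
    intro x hx
    simp only [Set.mem_setOf_eq] at hx
    by_cases h1 : χ.1 x = none
    · exact Or.inl (Or.inl h1)
    by_cases h2 : χ.1 (x + 1) = none
    · exact Or.inl (Or.inr ⟨x + 1, h2, by ring⟩)
    obtain ⟨c, hc⟩ := Option.ne_none_iff_exists'.1 h1
    obtain ⟨d, hd⟩ := Option.ne_none_iff_exists'.1 h2
    right
    refine ⟨c, hc, fun z hz => ?_⟩
    have hcd : c < d := smono hc hd (by omega)
    have hdc : d ≠ c + 1 := fun h => hx ⟨c, hc, h ▸ hd⟩
    rcases le_or_gt z x with h | h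
    · have := χ.2.mono hz hc h
      omega
    · have := χ.2.mono hd hz (by omega)
      omega
  exact Set.Finite.subset ((χ.2.cofin_dom.union (χ.2.cofin_dom.image _)).union h3) hsub

/-- Every element of `IZ` is a translation outside a finite window. -/
theorem exists_window (χ : IZ) : ∃ n : ℕ, ∃ cp cq : ℤ,
    χ.1 (-(n : ℤ)) = some cp ∧ χ.1 (n : ℤ) = some cq ∧
    (∀ x : ℤ, (n : ℤ) ≤ x → χ.1 x = some (cq + (x - n))) ∧
    (∀ x : ℤ, x ≤ -(n : ℤ) → χ.1 x = some (cp + (x + n))) := by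
  obtain ⟨A, hA⟩ := (bad_finite χ).bddAbove
  obtain ⟨B, hB⟩ := (bad_finite χ).bddBelow
  obtain ⟨n, hn⟩ : ∃ n : ℕ, A < (n : ℤ) ∧ -(n : ℤ) < B := by
    refine ⟨(max (A + 1) (1 - B)).toNat, ?_, ?_⟩ <;>
      · have h1 := le_max_left (A + 1) (1 - B)
        have h2 := le_max_right (A + 1) (1 - B)
        have h3 := Int.self_le_toNat (max (A + 1) (1 - B))
        omega
  have hgood : ∀ x : ℤ, ((n : ℤ) ≤ x ∨ x ≤ -(n : ℤ)) →
      ∃ c, χ.1 x = some c ∧ χ.1 (x + 1) = some (c + 1) := by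
    intro x hx
    by_contra hbad
    have hmem : x ∈ {x : ℤ | ¬ ∃ c, χ.1 x = some c ∧ χ.1 (x + 1) = some (c + 1)} := hbad
    have h1 := hA hmem
    have h2 := hB hmem
    omega
  obtain ⟨cq, hcq, -⟩ := hgood (n : ℤ) (Or.inl le_rfl)
  obtain ⟨cp, hcp, -⟩ := hgood (-(n : ℤ)) (Or.inr le_rfl)
  refine ⟨n, cp, cq, hcp, hcq, ?_, ?_⟩
  · refine Int.le_induction ?_ fun x hx ih => ?_
    · rw [show cq + ((n : ℤ) - n) = cq by ring]; exact hcq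
    · 
      obtain ⟨c, hc, hc1⟩ := hgood x (Or.inl hx)
      have : c = cq + (x - n) := by
        have := hc.symm.trans ih
        exact Option.some.inj this
      rw [show cq + (x + 1 - n) = c + 1 by omega]
      exact hc1
  · refine Int.le_induction_down ?_ fun x hx ih => ?_
    · rw [show cp + (-(n : ℤ) + n) = cp by ring]; exact hcp
    · 
      obtain ⟨c, hc, hc1⟩ := hgood (x - 1) (Or.inr (by omega))
      rw [sub_add_cancel] at hc1
      have : c + 1 = cp + (x + n) := by
        have := hc1.symm.trans ih
        exact Option.some.inj this
      rw [show cp + (x - 1 + n) = c by omega]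
      exact hc

end IZ

namespace IZ

/-! ### Countability of `IZ` -/

noncomputable def wN (χ : IZ) : ℕ := (exists_window χ).choose
noncomputable def wP (χ : IZ) : ℤ := (exists_window χ).choose_spec.choose
noncomputable def wQ (χ : IZ) : ℤ := (exists_window χ).choose_spec.choose_spec.choose

theorem w_spec (χ : IZ) :
    χ.1 (-(wN χ : ℤ)) = some (wP χ) ∧ χ.1 (wN χ : ℤ) = some (wQ χ) ∧
    (∀ x : ℤ, (wN χ : ℤ) ≤ x → χ.1 x = some (wQ χ + (x - wN χ))) ∧
    (∀ x : ℤ, x ≤ -(wN χ : ℤ) → χ.1 x = some (wP χ + (x + wN χ))) :=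
  (exists_window χ).choose_spec.choose_spec.choose_spec

/-- The graph of `χ` on the window `[-wN χ, wN χ]`. -/
def wG (χ : IZ) (n : ℕ) : Set (ℤ × ℤ) :=
  {p : ℤ × ℤ | -(n : ℤ) ≤ p.1 ∧ p.1 ≤ (n : ℤ) ∧ χ.1 p.1 = some p.2}

theorem wG_finite (χ : IZ) (n : ℕ) : (wG χ n).Finite := by
  apply Set.Finite.of_finite_image (f := Prod.fst)
  · apply (Set.finite_Icc (-(n : ℤ)) (n : ℤ)).subset
    rintro x ⟨p, ⟨h1, h2, -⟩, rfl⟩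
    exact ⟨h1, h2⟩
  · rintro ⟨x, y⟩ ⟨-, -, hy⟩ ⟨x', y'⟩ ⟨-, -, hy'⟩ h
    simp only at h
    subst h
    have : y = y' := Option.some.inj (hy.symm.trans hy')
    rw [this]

instance : Countable IZ := by
  have h1 : {s : Set (ℤ × ℤ) | s.Finite}.Countable := Set.Countable.setOf_finite
  haveI h2 : Countable {s : Set (ℤ × ℤ) // s.Finite} := h1.to_subtype
  refine Function.Injective.countable
    (f := fun χ : IZ => ((wN χ, wP χ, wQ χ, ⟨wG χ (wN χ), wG_finite χ (wN χ)⟩) :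
      ℕ × ℤ × ℤ × {s : Set (ℤ × ℤ) // s.Finite})) ?_
  intro χ ψ h
  have hn : wN χ = wN ψ := congrArg (fun t : ℕ × ℤ × ℤ × {s : Set (ℤ × ℤ) // s.Finite} => t.1) h
  have hp : wP χ = wP ψ := congrArg (fun t : ℕ × ℤ × ℤ × {s : Set (ℤ × ℤ) // s.Finite} => t.2.1) h
  have hq : wQ χ = wQ ψ := congrArg (fun t : ℕ × ℤ × ℤ × {s : Set (ℤ × ℤ) // s.Finite} => t.2.2.1) h
  have hG : wG χ (wN χ) = wG ψ (wN ψ) :=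
    congrArg (fun t : ℕ × ℤ × ℤ × {s : Set (ℤ × ℤ) // s.Finite} => (t.2.2.2 : Set (ℤ × ℤ))) h
  obtain ⟨-, -, hχq, hχp⟩ := w_spec χ
  obtain ⟨-, -, hψq, hψp⟩ := w_spec ψ
  apply Subtype.ext; funext x
  rcases le_or_gt (wN χ : ℤ) x with hx | hx
  · rw [hχq x hx, hψq x (hn ▸ hx), hq, hn]
  rcases le_or_gt x (-(wN χ : ℤ)) with hx' | hx'
  · rw [hχp x hx', hψp x (hn ▸ hx'), hp, hn]
  · -- inside the window
    cases hv : χ.1 x with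
    | none =>
      cases hv' : ψ.1 x with
      | none => rfl
      | some y =>
        have hmem : (x, y) ∈ wG ψ (wN ψ) := ⟨by omega, by omega, hv'⟩
        rw [← hG] at hmem
        rw [hmem.2.2] at hv
        cases hv
    | some y =>
      have hmem : (x, y) ∈ wG χ (wN χ) := ⟨by omega, by omega, hv⟩
      rw [hG] at hmem
      exact hmem.2.2.symm

end IZ

namespace IZ

/-! ### Key finiteness lemma: maps agreeing with `a` on a cofinite subset of its domain -/

theorem fin_lemma (a : IZ) (S : Set ℤ) (hS : Sᶜ.Finite)
    (hSd : ∀ y ∈ S, a.1 y ≠ none) :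
    {χ : IZ | ∀ y ∈ S, χ.1 y = a.1 y}.Finite := by
  obtain ⟨m, hm⟩ : ∃ m : ℤ, ∀ y ∈ Sᶜ, -m < y ∧ y < m := by
    obtain ⟨A, hA⟩ := hS.bddAbove
    obtain ⟨B, hB⟩ := hS.bddBelow
    refine ⟨max (A + 1) (1 - B), fun y hy => ?_⟩
    have h1 := le_max_left (A + 1) (1 - B)
    have h2 := le_max_right (A + 1) (1 - B)
    have h3 := hA hy
    have h4 := hB hy
    omega
  have hpS : -m ∈ S := by
    by_contra hp
    exact absurd (hm _ hp).1 (by omega)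
  have hqS : m ∈ S := by
    by_contra hq
    exact absurd (hm _ hq).2 (by omega)
  obtain ⟨cp, hcp⟩ := Option.ne_none_iff_exists'.1 (hSd _ hpS)
  obtain ⟨cq, hcq⟩ := Option.ne_none_iff_exists'.1 (hSd _ hqS)
  haveI : Finite ↥(Sᶜ) := hS.to_subtype
  set V : Set (Option ℤ) := insert none (some '' Set.Icc cp cq) with hV
  have hVfin : V.Finite := ((Set.finite_Icc cp cq).image some).insert none
  have key : ∀ χ : IZ, (∀ y ∈ S, χ.1 y = a.1 y) → ∀ y ∈ Sᶜ, χ.1 y ∈ V := by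
    intro χ hχ y hy
    cases hv : χ.1 y with
    | none => exact Set.mem_insert _ _
    | some z =>
      have h1 : χ.1 (-m) = some cp := (hχ _ hpS).trans hcp
      have h2 : χ.1 m = some cq := (hχ _ hqS).trans hcq
      have hb1 := (hm y hy).1
      have hb2 := (hm y hy).2
      have hle1 : cp ≤ z := χ.2.mono h1 hv (by omega)
      have hle2 : z ≤ cq := χ.2.mono hv h2 (by omega)
      exact Set.mem_insert_of_mem _ ⟨z, ⟨hle1, hle2⟩, rfl⟩
  apply Set.Finite.of_finite_image (f := fun χ : IZ => (fun y : ↥(Sᶜ) => χ.1 y))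
  · apply (Set.Finite.pi (fun _ : ↥(Sᶜ) => hVfin)).subset
    rintro g ⟨χ, hχ, rfl⟩
    exact Set.mem_univ_pi.2 fun y => key χ hχ y y.2
  · intro χ hχ ψ hψ h
    apply Subtype.ext; funext y
    by_cases hy : y ∈ S
    · rw [hχ y hy, hψ y hy]
    · exact congrFun h ⟨y, hy⟩

/-! ### A total element with prescribed cofinite range -/

def skipf (j : ℤ) : ℤ → Option ℤ := fun x => if x < j then some x else some (x + 1)

theorem isMIP_skipf (j : ℤ) : IsMIP (skipf j) := by
  refine ⟨?_, ?_, ?_, ?_⟩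
  · intro x y a hx hy
    unfold skipf at hx hy
    split_ifs at hx hy with h1 h2 h2 <;>
      simp only [Option.some.injEq] at hx hy <;> omega
  · intro x y a b hx hy hxy
    unfold skipf at hx hy
    split_ifs at hx hy with h1 h2 h2 <;>
      simp only [Option.some.injEq] at hx hy <;> omega
  · have : {x : ℤ | skipf j x = none} = ∅ := by
      ext x
      simp only [Set.mem_setOf_eq, Set.mem_empty_iff_false, iff_false]
      unfold skipf
      split_ifs <;> simp
    rw [this]; exact Set.finite_empty
  · apply (Set.finite_singleton j).subset
    intro y hy
    simp only [Set.mem_setOf_eq] at hy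
    by_contra hne
    rcases lt_or_gt_of_ne hne with h | h
    · exact hy y (by unfold skipf; rw [if_pos h])
    · refine hy (y - 1) ?_
      unfold skipf
      rw [if_neg (by omega)]
      congr 1; omega

theorem exists_total_ran {D : Set ℤ} (hD : D.Finite) :
    ∃ u : IZ, (∀ x, ∃ y, u.1 x = some y) ∧ (∀ y, (∃ x, u.1 x = some y) ↔ y ∉ D) := by
  refine Set.Finite.induction_on D hD ?_ ?_
  · exact ⟨1, fun x => ⟨x, rfl⟩, fun y => by
      simp only [Set.mem_empty_iff_false, not_false_iff, iff_true]
      exact ⟨y, rfl⟩⟩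
  · rintro k s hks - ⟨u, hu1, hu2⟩
    obtain ⟨j, hj⟩ := (hu2 k).2 hks
    let w : IZ := ⟨skipf j, isMIP_skipf j⟩
    have hmul : ∀ z, (w * u).1 z = (skipf j z).bind u.1 := fun _ => rfl
    refine ⟨w * u, ?_, ?_⟩
    · intro x
      rw [hmul x]
      unfold skipf
      split_ifs with h
      · obtain ⟨y, hy⟩ := hu1 x
        exact ⟨y, by rw [Option.bind_some, hy]⟩
      · obtain ⟨y, hy⟩ := hu1 (x + 1)
        exact ⟨y, by rw [Option.bind_some, hy]⟩
    · intro y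
      constructor
      · rintro ⟨x, hx⟩
        rw [hmul x] at hx
        obtain ⟨t, ht, htu⟩ := Option.bind_eq_some_iff.1 hx
        have htj : t ≠ j := by
          unfold skipf at ht
          split_ifs at ht with h <;> simp only [Option.some.injEq] at ht <;> omega
        intro hmem
        rcases Set.mem_insert_iff.1 hmem with rfl | hmem'
        · exact htj (u.2.inj htu hj)
        · exact ((hu2 y).1 ⟨t, htu⟩) hmem'
      · intro hy
        have hyk : y ≠ k := fun h => hy (h ▸ Set.mem_insert k s)
        have hys : y ∉ s := fun h => hy (Set.mem_insert_of_mem k h)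
        obtain ⟨t, ht⟩ := (hu2 y).2 hys
        have htj : t ≠ j := fun h => hyk (Option.some.inj ((h ▸ ht).symm.trans hj))
        refine ⟨if t < j then t else t - 1, ?_⟩
        rw [hmul _]
        have hs : skipf j (if t < j then t else t - 1) = some t := by
          unfold skipf
          split_ifs with h1 h2 h2 <;> first | rfl | (try congr 1; omega) | omega
        rw [hs, Option.bind_some, ht]

/-! ### Partial inverse -/

open Classical in
noncomputable def pinv (f : ℤ → Option ℤ) : ℤ → Option ℤ :=
  fun y => if h : ∃ x, f x = some y then some h.choose else none

theorem pinv_eq_some {f : ℤ → Option ℤ} (hf : IsMIP f) {y x : ℤ} :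
    pinv f y = some x ↔ f x = some y := by
  unfold pinv
  split_ifs with h
  · constructor
    · intro hx
      have hspec := h.choose_spec
      rw [Option.some.injEq] at hx
      rwa [hx] at hspec
    · intro hx
      rw [Option.some.injEq]
      exact hf.inj h.choose_spec hx
  · constructor
    · intro h'
      cases h'
    · intro hx
      exact absurd ⟨x, hx⟩ h

theorem isMIP_pinv {f : ℤ → Option ℤ} (hf : IsMIP f) : IsMIP (pinv f) := by
  refine ⟨?_, ?_, ?_, ?_⟩
  · intro y y' x h h'
    rw [pinv_eq_some hf] at h h'
    exact Option.some.inj (h.symm.trans h')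
  · intro y y' x x' h h' hle
    rw [pinv_eq_some hf] at h h'
    by_contra hc
    push_neg at hc
    have h1 : y' ≤ y := hf.mono h' h hc.le
    have h2 : y = y' := le_antisymm hle h1
    subst h2
    exact absurd (hf.inj h h') (by omega)
  · apply hf.cofin_ran.subset
    intro y hy x hx
    simp only [Set.mem_setOf_eq] at hy
    unfold pinv at hy
    rw [dif_pos ⟨x, hx⟩] at hy
    cases hy
  · apply hf.cofin_dom.subset
    intro x hx
    simp only [Set.mem_setOf_eq] at hx ⊢
    by_contra hne
    obtain ⟨z, hz⟩ := Option.ne_none_iff_exists'.1 hne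
    exact hx z ((pinv_eq_some hf).2 hz)

end IZ

/-! ### Topological helper: in a T1 space, points of finite open sets are isolated -/

theorem IZ.singleton_open_of_finite_open {X : Type*} [TopologicalSpace X] [T1Space X]
    {U : Set X} (hU : IsOpen U) (hfin : U.Finite) {x : X} (hx : x ∈ U) :
    IsOpen ({x} : Set X) := by
  have h1 : IsClosed (U \ {x}) := (hfin.subset Set.diff_subset).isClosed
  have h2 : ({x} : Set X) = U ∩ (U \ {x})ᶜ := by
    ext z
    simp only [Set.mem_singleton_iff, Set.mem_inter_iff, Set.mem_compl_iff, Set.mem_diff]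
    constructor
    · rintro rfl
      exact ⟨hx, fun h => h.2 rfl⟩
    · rintro ⟨hz, h⟩
      by_contra hne
      exact h ⟨hz, hne⟩
  rw [h2]
  exact hU.inter h1.isOpen_compl

/-- Every Hausdorff Baire topology on `𝓘↗∞(ℤ)` with separately continuous
multiplication (a semitopological semigroup) is the discrete topology. -/
theorem statement17 (τ : TopologicalSpace IZ) (h2 : @T2Space IZ τ)
    (hl : ∀ a : IZ, @Continuous IZ IZ τ τ (fun x => a * x))
    (hr : ∀ a : IZ, @Continuous IZ IZ τ τ (fun x => x * a))
    (hb : @BaireSpace IZ τ) :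
    @DiscreteTopology IZ τ := by
  letI := τ
  haveI := h2
  haveI := hb
  haveI : Nonempty IZ := ⟨1⟩
  -- Step A: there is an isolated point.
  obtain ⟨c, hc⟩ : ∃ c : IZ, IsOpen ({c} : Set IZ) := by
    by_contra hno
    push_neg at hno
    have hdense : ∀ χ : IZ, Dense ({χ}ᶜ : Set IZ) := by
      intro χ
      rw [← interior_eq_empty_iff_dense_compl]
      by_contra hne
      obtain ⟨y, hy⟩ := Set.nonempty_iff_ne_empty.2 hne
      have hy' : y = χ := by simpa using interior_subset hy
      have hy2 : χ ∈ interior ({χ} : Set IZ) := by rwa [hy'] at hy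
      have heq : interior ({χ} : Set IZ) = {χ} :=
        Set.Subset.antisymm interior_subset (Set.singleton_subset_iff.2 hy2)
      exact hno χ (heq ▸ isOpen_interior)
    have hd : Dense (⋂ χ : IZ, ({χ}ᶜ : Set IZ)) :=
      dense_iInter_of_isOpen (fun χ => isClosed_singleton.isOpen_compl) hdense
    have hempty : (⋂ χ : IZ, ({χ}ᶜ : Set IZ)) = ∅ := by
      ext ψ
      simp only [Set.mem_iInter, Set.mem_compl_iff, Set.mem_singleton_iff,
        Set.mem_empty_iff_false, iff_false, not_forall, not_not]
      exact ⟨ψ, rfl⟩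
    rw [hempty] at hd
    obtain ⟨z, hz⟩ := hd.nonempty
    exact hz
  -- Step B: `1` is isolated.
  have h1open : IsOpen ({(1 : IZ)} : Set IZ) := by
    have hUopen : IsOpen ((fun χ : IZ => χ * c) ⁻¹' {c}) := hc.preimage (hr c)
    have hSc : {y : ℤ | c.1 y ≠ none}ᶜ.Finite := by
      rw [Set.compl_setOf]
      simp only [not_not]
      exact c.2.cofin_dom
    have hUsub : ((fun χ : IZ => χ * c) ⁻¹' {c}) ⊆
        {χ : IZ | ∀ y ∈ {y : ℤ | c.1 y ≠ none}, χ.1 y = (1 : IZ).1 y} := by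
      intro χ hχ y hy
      have hcc : χ * c = c := hχ
      obtain ⟨z, hz⟩ := Option.ne_none_iff_exists'.1 hy
      have hmul : (χ.1 y).bind c.1 = c.1 y := congrFun (congrArg Subtype.val hcc) y
      rw [hz] at hmul
      obtain ⟨w, hw, hwc⟩ := Option.bind_eq_some_iff.1 hmul
      have hwy : w = y := c.2.inj hwc hz
      rw [hwy] at hw
      rw [IZ.one_def]
      exact hw
    have hUfin : ((fun χ : IZ => χ * c) ⁻¹' {c}).Finite :=
      (IZ.fin_lemma 1 {y : ℤ | c.1 y ≠ none} hSc
        (fun y _ => by rw [IZ.one_def]; exact Option.some_ne_none y)).subset hUsub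
    have h1mem : (1 : IZ) ∈ (fun χ : IZ => χ * c) ⁻¹' {c} := by
      show (1 : IZ) * c ∈ ({c} : Set IZ)
      rw [one_mul]
      rfl
    exact IZ.singleton_open_of_finite_open hUopen hUfin h1mem
  -- Step C: every point is isolated.
  rw [discreteTopology_iff_isOpen_singleton]
  intro a
  obtain ⟨u, hu1, hu2⟩ := IZ.exists_total_ran a.2.cofin_dom
  set b : IZ := u * a with hbdef
  have hbx : ∀ x y, u.1 x = some y → b.1 x = a.1 y := by
    intro x y hy
    show (u.1 x).bind a.1 = a.1 y
    rw [hy]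
    rfl
  have hbtot : ∀ x, ∃ z, b.1 x = some z := by
    intro x
    obtain ⟨y, hy⟩ := hu1 x
    have hyD : y ∉ {t : ℤ | a.1 t = none} := (hu2 y).1 ⟨x, hy⟩
    obtain ⟨z, hz⟩ := Option.ne_none_iff_exists'.1 hyD
    exact ⟨z, (hbx x y hy).trans hz⟩
  set v : IZ := ⟨IZ.pinv b.1, IZ.isMIP_pinv b.2⟩ with hvdef
  have hTcont : Continuous (fun χ : IZ => u * χ * v) := (hr v).comp (hl u)
  have hTa : u * a * v = 1 := by
    apply Subtype.ext
    funext x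
    show ((u * a).1 x).bind v.1 = some x
    obtain ⟨z, hz⟩ := hbtot x
    rw [hz]
    show IZ.pinv b.1 z = some x
    exact (IZ.pinv_eq_some b.2).2 hz
  have hSc' : {y : ℤ | a.1 y ≠ none}ᶜ.Finite := by
    rw [Set.compl_setOf]
    simp only [not_not]
    exact a.2.cofin_dom
  have hsub : ((fun χ : IZ => u * χ * v) ⁻¹' {1}) ⊆
      {χ : IZ | ∀ y ∈ {y : ℤ | a.1 y ≠ none}, χ.1 y = a.1 y} := by
    intro χ hχ y hy
    have hT1 : u * χ * v = 1 := hχ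
    obtain ⟨x, hx⟩ := (hu2 y).2 hy
    have hx1 : ((u * χ).1 x).bind v.1 = some x := by
      have := congrFun (congrArg Subtype.val hT1) x
      exact this
    have hux : (u * χ).1 x = χ.1 y := by
      show (u.1 x).bind χ.1 = χ.1 y
      rw [hx]
      rfl
    rw [hux] at hx1
    obtain ⟨z, hz, hzv⟩ := Option.bind_eq_some_iff.1 hx1
    have hbz : b.1 x = some z := (IZ.pinv_eq_some b.2).1 hzv
    have hay : a.1 y = some z := (hbx x y hx).symm.trans hbz
    rw [hz, hay]
  have hfin : ((fun χ : IZ => u * χ * v) ⁻¹' {1}).Finite :=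
    (IZ.fin_lemma a {y : ℤ | a.1 y ≠ none} hSc' (fun y hy => hy)).subset hsub
  have hamem : a ∈ (fun χ : IZ => u * χ * v) ⁻¹' {1} := by
    show u * a * v ∈ ({1} : Set IZ)
    rw [hTa]
    rfl
  exact IZ.singleton_open_of_finite_open (h1open.preimage hTcont) hfin hamem
end

section
/- Let S be a Hausdorff topological semigroup (multiplication jointly continuous) containing 𝓘↗∞(ℤ) as a dense subsemigroup whose subspace topology is discrete. If the remainder I = S ∖ 𝓘↗∞(ℤ) is nonempty, then I is a two-sided ideal of S: for all s ∈ S and a ∈ I, both s·a ∈ I and a·s ∈ I. -/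
/-- Key finiteness lemma: the set of elements of `IZ` agreeing with a fixed element
off a finite set is finite, thanks to monotonicity. -/
theorem IZ_finite_agree {F : Set ℤ} (hF : F.Finite) (y₀ : IZ) :
    {y : IZ | ∀ u ∉ F, y.1 u = y₀.1 u}.Finite := by
  set A := {y : IZ | ∀ u ∉ F, y.1 u = y₀.1 u} with hA
  have hbadfin : (F ∪ {v | y₀.1 v = none}).Finite := hF.union y₀.2.cofin_dom
  have key : ∀ u : ℤ, ∃ V : Set (Option ℤ), V.Finite ∧ ∀ y ∈ A, y.1 u ∈ V := by
    intro u
    obtain ⟨v1, hv1⟩ := ((Set.Iio_infinite u).diff hbadfin).nonempty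
    obtain ⟨v2, hv2⟩ := ((Set.Ioi_infinite u).diff hbadfin).nonempty
    have hv1F : v1 ∉ F := fun h => hv1.2 (Or.inl h)
    have hv2F : v2 ∉ F := fun h => hv2.2 (Or.inl h)
    obtain ⟨a, ha⟩ : ∃ a, y₀.1 v1 = some a := by
      cases h : y₀.1 v1 with
      | none => exact absurd (Or.inr h) hv1.2
      | some a => exact ⟨a, rfl⟩
    obtain ⟨b, hb⟩ : ∃ b, y₀.1 v2 = some b := by
      cases h : y₀.1 v2 with
      | none => exact absurd (Or.inr h) hv2.2
      | some b => exact ⟨b, rfl⟩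
    refine ⟨insert none (some '' Set.Icc a b),
      ((Set.finite_Icc a b).image _).insert _, ?_⟩
    intro y hy
    cases h : y.1 u with
    | none => exact Set.mem_insert _ _
    | some z =>
      have hy1 : y.1 v1 = some a := by rw [hy v1 hv1F, ha]
      have hy2 : y.1 v2 = some b := by rw [hy v2 hv2F, hb]
      have h1 : a ≤ z := y.2.mono hy1 h (le_of_lt hv1.1)
      have h2 : z ≤ b := y.2.mono h hy2 (le_of_lt hv2.1)
      exact Set.mem_insert_iff.mpr (Or.inr ⟨z, ⟨h1, h2⟩, rfl⟩)
  choose V hVfin hV using key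
  have hinjOn : Set.InjOn (fun y : IZ => fun t : hF.toFinset => y.1 t.1) A := by
    intro y1 h1 y2 h2 heq
    apply Subtype.ext
    funext u
    by_cases hu : u ∈ F
    · have : u ∈ hF.toFinset := hF.mem_toFinset.mpr hu
      exact congrFun heq ⟨u, this⟩
    · rw [h1 u hu, h2 u hu]
  have himg : ((fun y : IZ => fun t : hF.toFinset => y.1 t.1) '' A).Finite := by
    apply Set.Finite.subset (Set.Finite.pi (fun t : hF.toFinset => hVfin t.1))
    rintro f ⟨y, hy, rfl⟩
    intro t _
    exact hV t.1 y hy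
  exact Set.Finite.of_finite_image himg hinjOn

theorem IZ_finite_left (x c : IZ) : {y : IZ | x * y = c}.Finite := by
  rcases Set.eq_empty_or_nonempty {y : IZ | x * y = c} with h | ⟨y₀, hy₀⟩
  · rw [h]; exact Set.finite_empty
  · apply Set.Finite.subset (IZ_finite_agree x.2.cofin_ran y₀)
    intro y hy u hu
    simp only [Set.mem_setOf_eq, not_forall, not_not] at hu
    obtain ⟨t, ht⟩ := hu
    have h1 : (x * y).1 t = y.1 u := by rw [IZ.mul_def, IZ.pcomp, ht]; rfl
    have h2 : (x * y₀).1 t = y₀.1 u := by rw [IZ.mul_def, IZ.pcomp, ht]; rfl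
    have hy' : x * y = c := hy
    have hy₀' : x * y₀ = c := hy₀
    rw [hy'] at h1; rw [hy₀'] at h2
    rw [← h1, ← h2]

theorem IZ_finite_right (x c : IZ) : {y : IZ | y * x = c}.Finite := by
  rcases Set.eq_empty_or_nonempty {y : IZ | y * x = c} with h | ⟨y₀, hy₀⟩
  · rw [h]; exact Set.finite_empty
  · apply Set.Finite.subset (IZ_finite_agree c.2.cofin_dom y₀)
    intro y hy u hu
    simp only [Set.mem_setOf_eq] at hu
    obtain ⟨v, hv⟩ : ∃ v, c.1 u = some v := Option.ne_none_iff_exists'.mp hu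
    have hy' : y * x = c := hy
    have hy₀' : y₀ * x = c := hy₀
    have h1 : (y.1 u).bind x.1 = some v := by
      have : (y * x).1 u = c.1 u := by rw [hy']
      rwa [hv] at this
    have h2 : (y₀.1 u).bind x.1 = some v := by
      have : (y₀ * x).1 u = c.1 u := by rw [hy₀']
      rwa [hv] at this
    rw [Option.bind_eq_some_iff] at h1 h2
    obtain ⟨p, hp, hpv⟩ := h1
    obtain ⟨q, hq, hqv⟩ := h2
    rw [hp, hq, x.2.inj hpv hqv]

/-- Topological core lemma, abstract in the multiplication so it covers both sides. -/
theorem statement18_aux (S : Type*) [TopologicalSpace S] [T1Space S]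
    (mS : S → S → S) (hc : Continuous fun p : S × S => mS p.1 p.2)
    (m : IZ → IZ → IZ)
    (e : IZ → S) (hinj : Function.Injective e)
    (hhom : ∀ a b : IZ, e (m a b) = mS (e a) (e b))
    (hdense : Dense (Set.range e))
    (hdisc : DiscreteTopology (Set.range e))
    (hfin : ∀ x c : IZ, {y : IZ | m x y = c}.Finite)
    (s a : S) (ha : a ∉ Set.range e) : mS s a ∉ Set.range e := by
  rintro ⟨c, hce⟩
  -- discreteness gives an open set isolating `e c`
  have hopen : IsOpen ({⟨e c, ⟨c, rfl⟩⟩} : Set (Set.range e)) := isOpen_discrete _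
  obtain ⟨U, hUopen, hUeq⟩ := isOpen_induced_iff.mp hopen
  have hcU : e c ∈ U := by
    have : (⟨e c, ⟨c, rfl⟩⟩ : Set.range e) ∈ Subtype.val ⁻¹' U := by
      rw [hUeq]; rfl
    exact this
  have hUonly : ∀ y : IZ, e y ∈ U → y = c := by
    intro y hyU
    have : (⟨e y, ⟨y, rfl⟩⟩ : Set.range e) ∈ Subtype.val ⁻¹' U := hyU
    rw [hUeq] at this
    exact hinj (congrArg Subtype.val this)
  -- continuity gives a product neighborhood
  have hpre : IsOpen ((fun p : S × S => mS p.1 p.2) ⁻¹' U) := hc.isOpen_preimage U hUopen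
  have hmempre : (s, a) ∈ (fun p : S × S => mS p.1 p.2) ⁻¹' U := by
    simp only [Set.mem_preimage]; rw [← hce]; exact hcU
  obtain ⟨V, W, hVopen, hWopen, hsV, haW, hVW⟩ :=
    isOpen_prod_iff.mp hpre s a hmempre
  -- density gives a point of the image in V
  obtain ⟨p, hpmem, hpV⟩ := hdense.exists_mem_open hVopen ⟨s, hsV⟩
  obtain ⟨x, rfl⟩ := hpmem
  -- the set of image points in W is infinite
  have hKinf : {y : IZ | e y ∈ W}.Infinite := by
    intro hKfin
    have himg : (e '' {y : IZ | e y ∈ W}).Finite := hKfin.image e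
    have hopen' : IsOpen (W \ e '' {y : IZ | e y ∈ W}) := hWopen.sdiff himg.isClosed
    have hamem : a ∈ W \ e '' {y : IZ | e y ∈ W} :=
      ⟨haW, fun ⟨y, _, hy⟩ => ha ⟨y, hy⟩⟩
    obtain ⟨q, hqmem, hqW⟩ := hdense.exists_mem_open hopen' ⟨a, hamem⟩
    obtain ⟨z, rfl⟩ := hqmem
    exact hqW.2 ⟨z, hqW.1, rfl⟩
  -- but every such y solves m x y = c, a finite set
  have hsub : {y : IZ | e y ∈ W} ⊆ {y : IZ | m x y = c} := by
    intro y hyW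
    have : (e x, e y) ∈ (fun p : S × S => mS p.1 p.2) ⁻¹' U :=
      hVW ⟨hpV, hyW⟩
    have hU' : e (m x y) ∈ U := by rw [hhom]; exact this
    exact hUonly _ hU'
  exact hKinf (Set.Finite.subset (hfin x c) hsub)

/-- If a Hausdorff topological semigroup `S` contains `𝓘↗∞(ℤ)` as a dense
subsemigroup whose subspace topology is discrete, and the remainder
`I = S \ 𝓘↗∞(ℤ)` is nonempty, then `I` is a two-sided ideal of `S`. -/
theorem statement18 (S : Type*) [Semigroup S] [TopologicalSpace S] [T2Space S]
    (hc : Continuous fun p : S × S => p.1 * p.2)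
    (e : IZ → S) (hinj : Function.Injective e)
    (hhom : ∀ a b : IZ, e (a * b) = e a * e b)
    (hdense : Dense (Set.range e))
    (hdisc : DiscreteTopology (Set.range e))
    (hne : (Set.range e)ᶜ.Nonempty) :
    ∀ s : S, ∀ a ∈ (Set.range e)ᶜ, s * a ∈ (Set.range e)ᶜ ∧ a * s ∈ (Set.range e)ᶜ := by
  intro s a ha
  constructor
  · exact statement18_aux S (fun p q => p * q) hc (fun x y => x * y) e hinj hhom
      hdense hdisc (fun x c => IZ_finite_left x c) s a ha
  · exact statement18_aux S (fun p q => q * p)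
      (hc.comp continuous_swap) (fun x y => y * x) e hinj
      (fun p q => hhom q p) hdense hdisc (fun x c => IZ_finite_right x c) s a ha
end
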